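/- For every integer n ≥ 3, the list 3-dynamic chromatic number of the wheel W_n satisfies ch_3^d(W_n) ≤ 6; that is, for every list assignment L on W_n with |L(v)| ≥ 6 for all vertices v, W_n admits a proper L-coloring in which every vertex v sees at least min{3, deg(v)} distinct colors on its neighborhood. -/

import Mathlib

/-- The wheel `W n`: a cycle on `n` vertices (`some i`) together with a hub vertex (`none`)
adjacent to every cycle vertex. -/
def wheel (n : ℕ) : SimpleGraph (Option (Fin n)) :=
  SimpleGraph.fromRel (fun a b =>
    match a, b with
    | none, some _ => True
    | some i, some j => (j : ℕ) = ((i : ℕ) + 1) % n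
    | _, _ => False)
/-- An `r`-dynamic coloring: a proper coloring such that each vertex `v` sees at least
`min r (deg v)` distinct colors on its neighborhood. -/
def IsDynColoring {V : Type} (G : SimpleGraph V) (r : ℕ) (φ : V → ℕ) : Prop :=
  (∀ ⦃u v : V⦄, G.Adj u v → φ u ≠ φ v) ∧
  ∀ v : V, min r ((G.neighborSet v).ncard) ≤ (φ '' G.neighborSet v).ncard


def prevSet (i : ℕ) : Finset ℕ := ({i-1, i-2, 0, 1} : Finset ℕ) ∩ Finset.range i

lemma prevSet_subset (i : ℕ) : prevSet i ⊆ Finset.range i := Finset.inter_subset_right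

lemma prevSet_card (i : ℕ) : (prevSet i).card ≤ 4 := by
  calc (prevSet i).card ≤ ({i-1, i-2, 0, 1} : Finset ℕ).card :=
        Finset.card_le_card Finset.inter_subset_left
    _ ≤ 4 := by
        apply le_trans (Finset.card_insert_le _ _)
        have := Finset.card_insert_le (i-2) ({0,1} : Finset ℕ)
        have h2 : ({0,1} : Finset ℕ).card = 2 := by decide
        omega

lemma greedy (A : ℕ → Finset ℕ) (c0 : ℕ) (hA : ∀ i, 6 ≤ (A i).card) (k : ℕ) :
    ∃ f : ℕ → ℕ, ∀ i < k, f i ∈ A i ∧ f i ∉ insert c0 ((prevSet i).image f) := by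
  induction k with
  | zero => exact ⟨fun _ => 0, by omega⟩
  | succ k ih =>
    obtain ⟨f, hf⟩ := ih
    set B := insert c0 ((prevSet k).image f) with hB
    have hBcard : B.card ≤ 5 := by
      rw [hB]
      have h1 := Finset.card_insert_le c0 ((prevSet k).image f)
      have h2 := Finset.card_image_le (s := prevSet k) (f := f)
      have := prevSet_card k
      omega
    have hne : (A k \ B).Nonempty := by
      rw [← Finset.card_pos]
      have h3 := Finset.card_sdiff_add_card (s := A k) (t := B)
      have h4 : (A k).card ≤ (A k ∪ B).card := Finset.card_le_card Finset.subset_union_left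
      have := hA k
      omega
    obtain ⟨c, hc⟩ := hne
    rw [Finset.mem_sdiff] at hc
    refine ⟨fun j => if j = k then c else f j, ?_⟩
    intro i hi
    have himg : ∀ i ≤ k, (prevSet i).image (fun j => if j = k then c else f j) = (prevSet i).image f := by
      intro i hik
      apply Finset.image_congr
      intro j hj
      have : j < i := Finset.mem_range.mp (prevSet_subset i hj)
      simp only
      rw [if_neg (by omega)]
    rcases Nat.lt_or_ge i k with h | h
    · rw [himg i (le_of_lt h)]
      simpa [Nat.ne_of_lt h] using hf i h
    · have hik : i = k := by omega
      subst hik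
      rw [himg i le_rfl]
      simp only [if_pos rfl]
      exact ⟨hc.1, hc.2⟩

private theorem wheel_aux (n : ℕ) (hn : 3 ≤ n)
    (L : Option (Fin n) → Finset ℕ) (c0 : ℕ) (hc0 : c0 ∈ L none)
    (f : ℕ → ℕ)
    (hmem : ∀ i (h : i < n), f i ∈ L (some ⟨i, h⟩))
    (hP0 : ∀ i < n, f i ≠ c0)
    (hPrev : ∀ i < n, ∀ j ∈ prevSet i, f i ≠ f j) :
    ∃ φ : Option (Fin n) → ℕ, (∀ v, φ v ∈ L v) ∧ IsDynColoring (wheel n) 3 φ := by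
  have hnpos : 0 < n := by omega
  have hmemprev : ∀ j i : ℕ, j < i → (j = i-1 ∨ j = i-2 ∨ j = 0 ∨ j = 1) → j ∈ prevSet i := by
    intro j i h1 h2
    simp only [prevSet, Finset.mem_inter, Finset.mem_insert, Finset.mem_singleton,
      Finset.mem_range]
    omega
  have E1 : ∀ a < n, f ((a+1) % n) ≠ f a := by
    intro a ha
    rcases Nat.lt_or_ge (a+1) n with h | h
    · rw [Nat.mod_eq_of_lt h]
      exact hPrev (a+1) h a (hmemprev a (a+1) (by omega) (by omega))
    · have he : a + 1 = n := by omega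
      rw [he, Nat.mod_self]
      exact (hPrev a ha 0 (hmemprev 0 a (by omega) (by omega))).symm
  have E2 : ∀ a < n, f ((a+2) % n) ≠ f a := by
    intro a ha
    rcases Nat.lt_or_ge (a+2) n with h | h
    · rw [Nat.mod_eq_of_lt h]
      exact hPrev (a+2) h a (hmemprev a (a+2) (by omega) (by omega))
    · rcases Nat.lt_or_ge (a+2) (n+1) with h2 | h2
      · have he : a + 2 = n := by omega
        rw [he, Nat.mod_self]
        exact (hPrev a ha 0 (hmemprev 0 a (by omega) (by omega))).symm
      · have he : a + 2 = n + 1 := by omega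
        have he2 : (a+2) % n = 1 := by
          rw [he, Nat.add_mod_left, Nat.mod_eq_of_lt (by omega)]
        rw [he2]
        exact (hPrev a ha 1 (hmemprev 1 a (by omega) (by omega))).symm
  set φ : Option (Fin n) → ℕ := fun v => v.elim c0 (fun i => f i.1) with hφ
  have arith1 : ∀ {i : ℕ}, i < n → (i+1) % n ≠ i := by
    intro i hi
    rcases Nat.lt_or_ge (i+1) n with h | h
    · rw [Nat.mod_eq_of_lt h]; omega
    · have : i + 1 = n := by omega
      rw [this, Nat.mod_self]; omega
  have arith2 : ∀ {i : ℕ}, i < n → ((i+n-1) % n + 1) % n = i := by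
    intro i hi
    rw [Nat.mod_add_mod]
    have h : i + n - 1 + 1 = i + n := by omega
    rw [h, Nat.add_mod_right, Nat.mod_eq_of_lt hi]
  have arith3 : ∀ {i : ℕ}, i < n → (i+n-1) % n ≠ i := by
    intro i hi h
    have h2 := arith2 hi
    rw [h] at h2
    exact arith1 hi h2
  have arith4 : ∀ {i : ℕ}, i < n → ((i+n-1) % n + 2) % n = (i+1) % n := by
    intro i hi
    rw [Nat.mod_add_mod]
    have h : i + n - 1 + 2 = (i + 1) + n := by omega
    rw [h, Nat.add_mod_right]
  have three_le : ∀ {x y z : ℕ} {S : Set ℕ}, S.Finite → x ∈ S → y ∈ S → z ∈ S →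
      x ≠ y → x ≠ z → y ≠ z → 3 ≤ S.ncard := by
    intro x y z S hS hx hy hz hxy hxz hyz
    have hsub : ({x, y, z} : Set ℕ) ⊆ S := by
      intro w hw
      simp only [Set.mem_insert_iff, Set.mem_singleton_iff] at hw
      rcases hw with rfl | rfl | rfl <;> assumption
    have h1 : ({x, y, z} : Set ℕ).ncard = 3 := by
      rw [Set.ncard_insert_of_notMem (by simp [hxy, hxz]) ((Set.finite_singleton z).insert y),
        Set.ncard_insert_of_notMem (by simp [hyz]) (Set.finite_singleton z),
        Set.ncard_singleton]
    calc 3 = ({x, y, z} : Set ℕ).ncard := h1.symm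
      _ ≤ S.ncard := Set.ncard_le_ncard hsub hS
  refine ⟨φ, ?_, ?_, ?_⟩
  · intro v
    cases v with
    | none => exact hc0
    | some i => simpa [hφ] using hmem i.1 i.2
  · intro u v huv
    rw [wheel, SimpleGraph.fromRel_adj] at huv
    obtain ⟨hne, hr⟩ := huv
    cases u with
    | none =>
      cases v with
      | none => exact absurd rfl hne
      | some j => exact fun h => hP0 j.1 j.2 h.symm
    | some i =>
      cases v with
      | none => exact fun h => hP0 i.1 i.2 h
      | some j =>
        rcases hr with h | h
        · intro he
          apply E1 i.1 i.2
          rw [← h]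
          exact he.symm
        · intro he
          apply E1 j.1 j.2
          rw [← h]
          exact he
  · intro v
    refine le_trans (min_le_left _ _) ?_
    have hfin : (φ '' (wheel n).neighborSet v).Finite :=
      ((wheel n).neighborSet v).toFinite.image φ
    cases v with
    | none =>
      have hadj : ∀ k : Fin n, (wheel n).Adj none (some k) := by
        intro k
        rw [wheel, SimpleGraph.fromRel_adj]
        exact ⟨by simp, Or.inl trivial⟩
      refine three_le hfin ⟨some ⟨0, by omega⟩, hadj _, rfl⟩ ⟨some ⟨1, by omega⟩, hadj _, rfl⟩
        ⟨some ⟨2, by omega⟩, hadj _, rfl⟩ ?_ ?_ ?_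
      · exact (hPrev 1 (by omega) 0 (hmemprev 0 1 (by omega) (by omega))).symm
      · exact (hPrev 2 (by omega) 0 (hmemprev 0 2 (by omega) (by omega))).symm
      · exact (hPrev 2 (by omega) 1 (hmemprev 1 2 (by omega) (by omega))).symm
    | some i =>
      have hi := i.2
      have hj1 : (i.1 + 1) % n < n := Nat.mod_lt _ hnpos
      have hj2 : (i.1 + n - 1) % n < n := Nat.mod_lt _ hnpos
      have hadj0 : (wheel n).Adj (some i) none := by
        rw [wheel, SimpleGraph.fromRel_adj]
        exact ⟨by simp, Or.inr trivial⟩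
      have hadj1 : (wheel n).Adj (some i) (some ⟨(i.1 + 1) % n, hj1⟩) := by
        rw [wheel, SimpleGraph.fromRel_adj]
        constructor
        · intro h
          apply arith1 hi
          exact (congrArg (fun o => (Option.getD o i).val) h).symm
        · exact Or.inl rfl
      have hadj2 : (wheel n).Adj (some i) (some ⟨(i.1 + n - 1) % n, hj2⟩) := by
        rw [wheel, SimpleGraph.fromRel_adj]
        constructor
        · intro h
          apply arith3 hi
          exact (congrArg (fun o => (Option.getD o i).val) h).symm
        · exact Or.inr (arith2 hi).symm
      refine three_le hfin ⟨none, hadj0, rfl⟩ ⟨_, hadj1, rfl⟩ ⟨_, hadj2, rfl⟩ ?_ ?_ ?_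
      · exact (hP0 _ hj1).symm
      · exact (hP0 _ hj2).symm
      · have := E2 _ hj2
        rw [arith4 hi] at this
        exact this

/-- **Proposition 1.5, first part.** For every `n ≥ 3`, `ch₃ᵈ(W n) ≤ 6`: for every list
assignment on the wheel `W n` with all lists of size at least `6`, there is a proper coloring
from the lists in which every vertex sees at least `min 3 (deg v)` colors on its neighborhood. -/
theorem wheel_list_three_dynamic_six (n : ℕ) (hn : 3 ≤ n)
    (L : Option (Fin n) → Finset ℕ) (hL : ∀ v, 6 ≤ (L v).card) :
    ∃ φ : Option (Fin n) → ℕ, (∀ v, φ v ∈ L v) ∧ IsDynColoring (wheel n) 3 φ := by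
  obtain ⟨c0, hc0⟩ : (L none).Nonempty := Finset.card_pos.mp (by have := hL none; omega)
  set A : ℕ → Finset ℕ := fun i => if h : i < n then L (some ⟨i, h⟩) else Finset.range 6 with hA
  have hAcard : ∀ i, 6 ≤ (A i).card := by
    intro i
    simp only [hA]
    split
    · exact hL _
    · simp
  obtain ⟨f, hf⟩ := greedy A c0 hAcard n
  refine wheel_aux n hn L c0 hc0 f ?_ ?_ ?_
  · intro i h
    have := (hf i h).1
    simp only [hA] at this
    rwa [dif_pos h] at this
  · intro i hi h
    exact (hf i hi).2 (h ▸ Finset.mem_insert_self _ _)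
  · intro i hi j hj h
    exact (hf i hi).2 (Finset.mem_insert_of_mem (Finset.mem_image.mpr ⟨j, hj, h.symm⟩))
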